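/- arXiv:1808.09687 — 2 statements merged into one kernel-verified Lean document; each statement's English description precedes it below -/
import Mathlib

section
/- Let P¹, P² be mutually orthogonal linear subspaces of ℝⁿ with P¹ ⊕ P² = ℝⁿ. Let w, w₁, w₂, w₃ be unit vectors in ℝⁿ such that ⟨w, w_i⟩ = 0 for i = 1,2,3 and ⟨w_i, w_j⟩ = −1/2 for i ≠ j, and suppose that for each i ∈ {1,2,3} there exists α_i ∈ [0,π/2] such that the 2-plane span{w, w_i} is 2-analytic between P¹ and P² with angle α_i. Then there exists α ∈ [0,π/2] such that α₁ = α₂ = α₃ = α, the subspace V = span{w, w₁, w₂, w₃} is 3-dimensional, and V is 3-analytic between P¹ and P² with angle α. (This is the linear-algebra content of the statement that every tangent Y-cone of a measure minimizer lies in an analytic 3-subspace between P¹ and P².) -/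
open Set Metric MeasureTheory Filter Pointwise
open scoped ENNReal RealInnerProductSpace NNReal

noncomputable section

/-- `Euc n` is the Euclidean space `ℝⁿ`. -/
abbrev Euc (n : ℕ) : Type := EuclideanSpace ℝ (Fin n)

variable {n : ℕ}

/-- A cone centered at `0`. -/
def IsCone0 (C : Set (Euc n)) : Prop :=
  (0 : Euc n) ∈ C ∧ ∀ t : ℝ, 0 < t → t • C = C

/-- `f` is (the time-one map of) a Lipschitz deformation in the set `U`. -/
def IsDeformationIn (U : Set (Euc n)) (f : Euc n → Euc n) : Prop :=
  ∃ φ : ℝ → Euc n → Euc n,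
    (∀ x ∈ U, φ 0 x = x) ∧
    (∀ t ∈ Icc (0:ℝ) 1, MapsTo (φ t) U U) ∧
    ContinuousOn (fun p : ℝ × Euc n => φ p.1 p.2) (Icc (0:ℝ) 1 ×ˢ U) ∧
    (∃ L : ℝ≥0, LipschitzOnWith L (φ 1) U) ∧
    (∀ x ∈ U, φ 1 x = f x) ∧
    closure (⋃ t ∈ Icc (0:ℝ) 1,
        ({x ∈ U | φ t x ≠ x} ∪ φ t '' {x ∈ U | φ t x ≠ x})) ⊆ U ∧
    IsCompact (closure (⋃ t ∈ Icc (0:ℝ) 1,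
        ({x ∈ U | φ t x ≠ x} ∪ φ t '' {x ∈ U | φ t x ≠ x})))

/-- `E` is a `d`-dimensional Almgren minimal set in the open set `U`
(`E ⊆ U` relatively closed). -/
def IsAlmgrenMinimalIn (d : ℕ) (U E : Set (Euc n)) : Prop :=
  E ⊆ U ∧ closure E ∩ U ⊆ E ∧
  (∀ (x : Euc n) (r : ℝ), closedBall x r ⊆ U → μH[(d:ℝ)] (E ∩ closedBall x r) < ⊤) ∧
  ∀ f : Euc n → Euc n, IsDeformationIn U f →
    μH[(d:ℝ)] (E \ f '' E) ≤ μH[(d:ℝ)] (f '' E \ E)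

/-- A set is reduced if it has positive `H^d` measure in every ball centered on it. -/
def IsReducedSet (d : ℕ) (E : Set (Euc n)) : Prop :=
  ∀ x ∈ E, ∀ r : ℝ, 0 < r → 0 < μH[(d:ℝ)] (E ∩ ball x r)

/-- A (reduced) `d`-dimensional Almgren minimal cone in `ℝⁿ`. -/
def IsAlmgrenMinimalCone (d : ℕ) (C : Set (Euc n)) : Prop :=
  IsClosed C ∧ IsCone0 C ∧ IsReducedSet d C ∧ IsAlmgrenMinimalIn d univ C

/-- The class `F(E,U)` of deformations of `E` in `U`. -/
def deformClass (U E : Set (Euc n)) : Set (Set (Euc n)) :=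
  {F | ∃ f, IsDeformationIn U f ∧ F = (E \ U) ∪ f '' (E ∩ U)}

/-- Convergence in local Hausdorff distance on every compact set. -/
def LocHausTendsto (S : ℕ → Set (Euc n)) (F : Set (Euc n)) : Prop :=
  ∀ K : Set (Euc n), IsCompact K →
    Tendsto (fun k => (⨆ y ∈ S k ∩ K, infDist y F) ⊔ (⨆ y ∈ F ∩ K, infDist y (S k)))
      atTop (nhds 0)

/-- The class `F̄(E,U)` of limits of deformations of `E` in `U`. -/
def limDeformClass (d : ℕ) (U E : Set (Euc n)) : Set (Set (Euc n)) :=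
  {F | F ⊆ closure U ∧ IsClosed F ∧
    (∃ S : ℕ → Set (Euc n), (∀ k, S k ∈ deformClass U E) ∧ LocHausTendsto S F) ∧
    (∀ (x : Euc n) (r : ℝ), μH[(d:ℝ)] (F ∩ closedBall x r) < ⊤) ∧
    μH[(d:ℝ)] ((F ∩ frontier U) \ E) = 0}

/-- `C` is Almgren unique in the domain `U`. -/
def AlmgrenUniqueIn (d : ℕ) (C U : Set (Euc n)) : Prop :=
  ∀ E ∈ limDeformClass d U C,
    μH[(d:ℝ)] E = (⨅ F ∈ limDeformClass d U C, μH[(d:ℝ)] F) → E = C ∩ closure U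

/-- `C` is Almgren unique (in every domain). -/
def AlmgrenUnique (d : ℕ) (C : Set (Euc n)) : Prop :=
  ∀ U : Set (Euc n), IsOpen U → IsConnected U → AlmgrenUniqueIn d C U

/-- `F` is a `δ`-sliding deformation of `E` in `cl(U)`. -/
def IsSlidingDeformation (δ : ℝ) (U E F : Set (Euc n)) : Prop :=
  ∃ φ : ℝ → Euc n → Euc n,
    (∀ x ∈ closure U, φ 0 x = x) ∧
    (∀ t ∈ Icc (0:ℝ) 1, MapsTo (φ t) (closure U) (closure U)) ∧
    ContinuousOn (fun p : ℝ × Euc n => φ p.1 p.2) (Icc (0:ℝ) 1 ×ˢ closure U) ∧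
    (∃ L : ℝ≥0, LipschitzOnWith L (φ 1) (closure U)) ∧
    (∀ t ∈ Icc (0:ℝ) 1, MapsTo (φ t) (frontier U) (frontier U)) ∧
    (∀ t ∈ Icc (0:ℝ) 1, ∀ x ∈ E ∩ frontier U, ‖φ t x - x‖ < δ) ∧
    F = φ 1 '' E

/-- The class `F̄_δ(E, cl U)` of limits of `δ`-sliding deformations of `E`. -/
def slidingLimClass (d : ℕ) (δ : ℝ) (U E : Set (Euc n)) : Set (Set (Euc n)) :=
  {F | F ⊆ closure U ∧ IsClosed F ∧
    (∃ S : ℕ → Set (Euc n), (∀ k, IsSlidingDeformation δ U E (S k)) ∧ LocHausTendsto S F) ∧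
    (∀ (x : Euc n) (r : ℝ), μH[(d:ℝ)] (F ∩ closedBall x r) < ⊤) ∧
    μH[(d:ℝ)] ((F ∩ frontier U) \ E) = 0}

/-- `E` is `δ`-sliding minimal in `cl(U)`. -/
def IsSlidingMinimal (d : ℕ) (δ : ℝ) (U E : Set (Euc n)) : Prop :=
  ∀ F ∈ slidingLimClass d δ U E, μH[(d:ℝ)] (E \ F) ≤ μH[(d:ℝ)] (F \ E)

/-- The trace of a cone on the unit sphere. -/
def spherePart (K : Set (Euc n)) : Set (Euc n) := K ∩ sphere (0 : Euc n) 1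

/-- A point of `K ∩ ∂B(0,1)` at which the net `K ∩ ∂B(0,1)` is not locally
homeomorphic to an interval (a `Y` point of the net). -/
def IsYPoint (K : Set (Euc n)) (a : Euc n) : Prop :=
  a ∈ spherePart K ∧
  ¬ ∃ W : Set (Euc n), IsOpen W ∧ a ∈ W ∧
      Nonempty ((spherePart K ∩ W : Set (Euc n)) ≃ₜ (Set.Ioo (0:ℝ) 1))

/-- The convex domain `U(K,η)` associated to a `2`-dimensional minimal cone `K`. -/
def UDomain (K : Set (Euc n)) (η : ℝ) : Set (Euc n) :=
  {x ∈ ball (0 : Euc n) 1 |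
    (∀ y ∈ spherePart K, ⟪x, y⟫ < 1 - η) ∧
    (∀ a : Euc n, IsYPoint K a → ⟪x, a⟫ < 1 - 2 * η)}

/-- `K` is sliding stable: for some small `η` and some `δ > 0`, `K` is
`δ`-sliding minimal in `cl(U(K,η))`. -/
def SlidingStable (d : ℕ) (K : Set (Euc n)) : Prop :=
  ∃ η δ : ℝ, 0 < η ∧ η < 1 / 100 ∧ 0 < δ ∧
    IsSlidingMinimal d δ (UDomain K η) (K ∩ closure (UDomain K η))

/-- The minimal angle between two cones: the largest `θ ∈ [0,π/2]` such that
`|⟨u,v⟩| ≤ cos θ‖u‖‖v‖` for all `u ∈ A`, `v ∈ B`. -/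
def minAngle (A B : Set (Euc n)) : ℝ :=
  sSup {θ : ℝ | θ ∈ Icc 0 (Real.pi / 2) ∧
    ∀ u ∈ A, ∀ v ∈ B, |⟪u, v⟫| ≤ Real.cos θ * (‖u‖ * ‖v‖)}

/-- `|x₁ ∧ ⋯ ∧ x_d|`: the `d`-volume of the parallelepiped spanned by `x₁,…,x_d`,
i.e. the square root of the Gram determinant. -/
def wedgeNorm {d : ℕ} (x : Fin d → Euc n) : ℝ :=
  Real.sqrt (Matrix.det (Matrix.of fun i j => ⟪x i, x j⟫))

/-- The isometric inclusion `ℝ^{n₁} → ℝ^{n₁} × {0} ⊆ ℝ^{n₁+n₂}`. -/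
def pad1 (n₁ n₂ : ℕ) (x : Euc n₁) : Euc (n₁ + n₂) :=
  (EuclideanSpace.equiv (Fin (n₁ + n₂)) ℝ).symm
    (fun i => if h : (i : ℕ) < n₁ then x ⟨i, h⟩ else 0)

/-- The isometric inclusion `ℝ^{n₂} → {0} × ℝ^{n₂} ⊆ ℝ^{n₁+n₂}`. -/
def pad2 (n₁ n₂ : ℕ) (x : Euc n₂) : Euc (n₁ + n₂) :=
  (EuclideanSpace.equiv (Fin (n₁ + n₂)) ℝ).symm
    (fun i => if _ : (i : ℕ) < n₁ then 0 else x ⟨(i : ℕ) - n₁, by omega⟩)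

/-- The orthogonal union `E₁ ∪⊥ E₂ = (E₁ × {0}) ∪ ({0} × E₂) ⊆ ℝ^{n₁+n₂}`. -/
def orthUnion (n₁ n₂ : ℕ) (E₁ : Set (Euc n₁)) (E₂ : Set (Euc n₂)) : Set (Euc (n₁ + n₂)) :=
  pad1 n₁ n₂ '' E₁ ∪ pad2 n₁ n₂ '' E₂

/-- The projection `ℝ^{n₁+n₂} → ℝ^{n₁}` on the first factor. -/
def proj1 (n₁ n₂ : ℕ) (x : Euc (n₁ + n₂)) : Euc n₁ :=
  (EuclideanSpace.equiv (Fin n₁) ℝ).symm fun i => x (Fin.castAdd n₂ i)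

/-- The projection `ℝ^{n₁+n₂} → ℝ^{n₂}` on the second factor. -/
def proj2 (n₁ n₂ : ℕ) (x : Euc (n₁ + n₂)) : Euc n₂ :=
  (EuclideanSpace.equiv (Fin n₂) ℝ).symm fun i => x (Fin.natAdd n₁ i)

/-- Orthogonal projection of `ℝ^{n₁+n₂}` onto `P¹ = ℝ^{n₁} × {0}`. -/
def projTo1 (n₁ n₂ : ℕ) (x : Euc (n₁ + n₂)) : Euc (n₁ + n₂) := pad1 n₁ n₂ (proj1 n₁ n₂ x)

/-- Orthogonal projection of `ℝ^{n₁+n₂}` onto `P² = {0} × ℝ^{n₂}`. -/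
def projTo2 (n₁ n₂ : ℕ) (x : Euc (n₁ + n₂)) : Euc (n₁ + n₂) := pad2 n₁ n₂ (proj2 n₁ n₂ x)

/-- `T` is the approximate tangent `d`-plane of `F` at `x`. -/
def IsApproxTangent (d : ℕ) (F : Set (Euc n)) (x : Euc n) (T : Submodule ℝ (Euc n)) : Prop :=
  Module.finrank ℝ T = d ∧
  0 < Filter.limsup (fun r : ℝ => μH[(d:ℝ)] (F ∩ ball x r) / ENNReal.ofReal (r ^ d))
      (nhdsWithin 0 (Ioi 0)) ∧
  ∀ ε : ℝ, 0 < ε →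
    Tendsto (fun r : ℝ =>
        μH[(d:ℝ)] ((F ∩ ball x r) ∩ {y | ε * ‖y - x‖ < infDist (y - x) (T : Set (Euc n))}) /
          ENNReal.ofReal (r ^ d))
      (nhdsWithin 0 (Ioi 0)) (nhds 0)

/-- `F` is `d`-rectifiable. -/
def IsRectifiable (d : ℕ) (F : Set (Euc n)) : Prop :=
  ∃ f : ℕ → (Euc d → Euc n),
    (∀ k, ∃ L : ℝ≥0, LipschitzWith L (f k)) ∧
    μH[(d:ℝ)] (F \ ⋃ k, range (f k)) = 0

/-- Orthogonal projection onto a submodule, as a map of the ambient space. -/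
def oproj (P : Submodule ℝ (Euc n)) (v : Euc n) : Euc n :=
  (P.orthogonalProjectionOnto v : Euc n)

/-- A nonzero vector `z` has angle `α` between `P¹` and `P²`. -/
def HasAngleBetween (P₁ P₂ : Submodule ℝ (Euc n)) (α : ℝ) (z : Euc n) : Prop :=
  ‖oproj P₁ z‖ = Real.cos α * ‖z‖ ∧ ‖oproj P₂ z‖ = Real.sin α * ‖z‖

/-- `T` is a `d`-analytic subspace between `P¹` and `P²` with angle `α`. -/
def IsAnalyticSubspace (P₁ P₂ : Submodule ℝ (Euc n)) (α : ℝ) (T : Submodule ℝ (Euc n)) : Prop :=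
  ∀ z ∈ T, z ≠ 0 → HasAngleBetween P₁ P₂ α z

/-- The point `(a,b) ∈ ℝ²`. -/
def mk2 (a b : ℝ) : Euc 2 := (EuclideanSpace.equiv (Fin 2) ℝ).symm ![a, b]

/-- The sector `R_α = {(r,θ) : r₀ ≤ r ≤ 1, 0 ≤ θ ≤ π/α}` (polar coordinates). -/
def sectorR (α : ℕ) (r₀ : ℝ) : Set (Euc 2) :=
  {x | ∃ r θ : ℝ, r₀ ≤ r ∧ r ≤ 1 ∧ 0 ≤ θ ∧ θ ≤ Real.pi / α ∧
    x = mk2 (r * Real.cos θ) (r * Real.sin θ)}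

/-- The inner arc `L_α = {(r₀,θ) : 0 ≤ θ ≤ π/α}`. -/
def sectorL (α : ℕ) (r₀ : ℝ) : Set (Euc 2) :=
  {x | ∃ θ : ℝ, 0 ≤ θ ∧ θ ≤ Real.pi / α ∧
    x = mk2 (r₀ * Real.cos θ) (r₀ * Real.sin θ)}

/-- The outer arc `K_α = {(1,θ) : 0 ≤ θ ≤ π/α}`. -/
def sectorK (α : ℕ) : Set (Euc 2) :=
  {x | ∃ θ : ℝ, 0 ≤ θ ∧ θ ≤ Real.pi / α ∧ x = mk2 (Real.cos θ) (Real.sin θ)}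

/-- The annular sector `{(r,θ) : s/4 ≤ r ≤ 2s, 0 ≤ θ ≤ θ₀}`. -/
def annR (θ₀ s : ℝ) : Set (Euc 2) :=
  {x | ∃ r θ : ℝ, s / 4 ≤ r ∧ r ≤ 2 * s ∧ 0 ≤ θ ∧ θ ≤ θ₀ ∧
    x = mk2 (r * Real.cos θ) (r * Real.sin θ)}

/-- The annular sector `{(r,θ) : s/4 ≤ r ≤ s, 0 ≤ θ ≤ θ₀}`. -/
def annR' (θ₀ s : ℝ) : Set (Euc 2) :=
  {x | ∃ r θ : ℝ, s / 4 ≤ r ∧ r ≤ s ∧ 0 ≤ θ ∧ θ ≤ θ₀ ∧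
    x = mk2 (r * Real.cos θ) (r * Real.sin θ)}


lemma oproj_add (P : Submodule ℝ (Euc n)) (x y : Euc n) :
    oproj P (x + y) = oproj P x + oproj P y := by simp [oproj]

lemma oproj_smul (P : Submodule ℝ (Euc n)) (a : ℝ) (x : Euc n) :
    oproj P (a • x) = a • oproj P x := by simp [oproj]

lemma polar (P : Submodule ℝ (Euc n)) (c : ℝ) (x y : Euc n)
    (hx : ‖oproj P x‖ = c * ‖x‖) (hy : ‖oproj P y‖ = c * ‖y‖)
    (hxy : ‖oproj P (x + y)‖ = c * ‖x + y‖) :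
    ⟪oproj P x, oproj P y⟫ = c ^ 2 * ⟪x, y⟫ := by
  have h1 : ‖oproj P x + oproj P y‖ ^ 2 = c ^ 2 * ‖x + y‖ ^ 2 := by
    rw [← oproj_add, hxy]; ring
  have h2 : ‖oproj P x‖ ^ 2 = c ^ 2 * ‖x‖ ^ 2 := by rw [hx]; ring
  have h3 : ‖oproj P y‖ ^ 2 = c ^ 2 * ‖y‖ ^ 2 := by rw [hy]; ring
  rw [norm_add_sq_real, norm_add_sq_real] at h1
  linear_combination (h1 - h2 - h3) / 2

lemma quad (P : Submodule ℝ (Euc n)) (c : ℝ) (hc : 0 ≤ c) (u v t : Euc n)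
    (huu : ⟪oproj P u, oproj P u⟫ = c ^ 2 * ⟪u, u⟫)
    (hvv : ⟪oproj P v, oproj P v⟫ = c ^ 2 * ⟪v, v⟫)
    (htt : ⟪oproj P t, oproj P t⟫ = c ^ 2 * ⟪t, t⟫)
    (huv : ⟪oproj P u, oproj P v⟫ = c ^ 2 * ⟪u, v⟫)
    (hut : ⟪oproj P u, oproj P t⟫ = c ^ 2 * ⟪u, t⟫)
    (hvt : ⟪oproj P v, oproj P t⟫ = c ^ 2 * ⟪v, t⟫)
    (a b d : ℝ) :
    ‖oproj P (a • u + b • v + d • t)‖ = c * ‖a • u + b • v + d • t‖ := by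
  have huv' : ⟪oproj P v, oproj P u⟫ = c ^ 2 * ⟪v, u⟫ := by
    rw [real_inner_comm, real_inner_comm u v]; exact huv
  have hut' : ⟪oproj P t, oproj P u⟫ = c ^ 2 * ⟪t, u⟫ := by
    rw [real_inner_comm, real_inner_comm u t]; exact hut
  have hvt' : ⟪oproj P t, oproj P v⟫ = c ^ 2 * ⟪t, v⟫ := by
    rw [real_inner_comm, real_inner_comm v t]; exact hvt
  have hin : ⟪oproj P (a • u + b • v + d • t), oproj P (a • u + b • v + d • t)⟫
      = c ^ 2 * ⟪a • u + b • v + d • t, a • u + b • v + d • t⟫ := by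
    rw [oproj_add, oproj_add, oproj_smul, oproj_smul, oproj_smul]
    simp only [inner_add_left, inner_add_right, real_inner_smul_left, real_inner_smul_right]
    linear_combination (a ^ 2) * huu + (b ^ 2) * hvv + (d ^ 2) * htt
      + (a * b) * huv + (a * b) * huv' + (a * d) * hut + (a * d) * hut'
      + (b * d) * hvt + (b * d) * hvt'
  have h2 : ‖oproj P (a • u + b • v + d • t)‖ ^ 2 = (c * ‖a • u + b • v + d • t‖) ^ 2 := by
    rw [← real_inner_self_eq_norm_sq, hin, real_inner_self_eq_norm_sq]; ring
  calc ‖oproj P (a • u + b • v + d • t)‖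
      = Real.sqrt (‖oproj P (a • u + b • v + d • t)‖ ^ 2) :=
        (Real.sqrt_sq (norm_nonneg _)).symm
    _ = Real.sqrt ((c * ‖a • u + b • v + d • t‖) ^ 2) := by rw [h2]
    _ = c * ‖a • u + b • v + d • t‖ := Real.sqrt_sq (by positivity)


/-- **Position of tangent `Y` cones (Lemma 3.7, linear-algebra content).** Let `P¹ ⊥ P²`
with `P¹ ⊕ P² = ℝⁿ`. Let `w, w₁, w₂, w₃` be unit vectors with `w ⊥ w_i` and
`⟨w_i, w_j⟩ = −1/2` for `i ≠ j`, and suppose each 2-plane `span{w, w_i}` is 2-analytic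
between `P¹` and `P²` with some angle `α_i ∈ [0,π/2]`. Then all the `α_i` are equal to a
common `α`, the span `V` of `w, w₁, w₂, w₃` is 3-dimensional, and `V` is 3-analytic
between `P¹` and `P²` with angle `α`. -/
theorem tangent_Y_cone_in_analytic_subspace
    (n : ℕ) (P₁ P₂ : Submodule ℝ (Euc n))
    (horth : P₁ ≤ P₂ᗮ) (hcompl : P₁ ⊔ P₂ = ⊤)
    (w : Euc n) (ws : Fin 3 → Euc n)
    (hw : ‖w‖ = 1) (hws : ∀ i, ‖ws i‖ = 1)
    (hwo : ∀ i, ⟪w, ws i⟫ = 0)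
    (hij : ∀ i j, i ≠ j → ⟪ws i, ws j⟫ = -(1 / 2))
    (α : Fin 3 → ℝ) (hα : ∀ i, α i ∈ Icc 0 (Real.pi / 2))
    (han : ∀ i, IsAnalyticSubspace P₁ P₂ (α i) (Submodule.span ℝ {w, ws i})) :
    ∃ a ∈ Icc (0 : ℝ) (Real.pi / 2), (∀ i, α i = a) ∧
      Module.finrank ℝ (Submodule.span ℝ (insert w (range ws))) = 3 ∧
      IsAnalyticSubspace P₁ P₂ a (Submodule.span ℝ (insert w (range ws))) := by
  have hwne : w ≠ 0 := fun h => by simp [h] at hw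
  have hwsne : ∀ i, ws i ≠ 0 := fun i h => by simpa [h] using hws i
  -- inner product facts
  have hwsq : ⟪w, w⟫ = 1 := by
    rw [real_inner_self_eq_norm_sq, hw]; norm_num
  have hwssq : ∀ i, ⟪ws i, ws i⟫ = 1 := fun i => by
    rw [real_inner_self_eq_norm_sq, hws]; norm_num
  have hwo' : ∀ i, ⟪ws i, w⟫ = 0 := fun i => by
    rw [real_inner_comm]; exact hwo i
  -- the sum of the ws is zero
  have hsum : ws 0 + ws 1 + ws 2 = 0 := by
    have : ⟪ws 0 + ws 1 + ws 2, ws 0 + ws 1 + ws 2⟫ = (0:ℝ) := by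
      simp only [inner_add_left, inner_add_right, hwssq,
        hij 0 1 (by decide), hij 0 2 (by decide), hij 1 2 (by decide),
        hij 1 0 (by decide), hij 2 0 (by decide), hij 2 1 (by decide)]
      norm_num
    exact inner_self_eq_zero.mp this
  -- memberships in the 2-planes
  have hwmem : ∀ i, w ∈ Submodule.span ℝ ({w, ws i} : Set (Euc n)) :=
    fun i => Submodule.subset_span (mem_insert _ _)
  have hwsmem : ∀ i, ws i ∈ Submodule.span ℝ ({w, ws i} : Set (Euc n)) :=
    fun i => Submodule.subset_span (mem_insert_of_mem _ rfl)
  have hwwsne : ∀ i, w + ws i ≠ 0 := by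
    intro i h
    have : ⟪w + ws i, w + ws i⟫ = (0:ℝ) := by rw [h]; simp
    simp only [inner_add_left, inner_add_right, hwsq, hwssq, hwo, hwo'] at this
    norm_num at this
  -- angles are all equal
  have hcos : ∀ i, Real.cos (α i) = ‖oproj P₁ w‖ := by
    intro i
    have := (han i w (hwmem i) hwne).1
    rw [hw, mul_one] at this; exact this.symm
  have hsin : ∀ i, Real.sin (α i) = ‖oproj P₂ w‖ := by
    intro i
    have := (han i w (hwmem i) hwne).2
    rw [hw, mul_one] at this; exact this.symm
  have hαeq : ∀ i, α i = α 0 := by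
    intro i
    have h1 : Real.cos (α i) = Real.cos (α 0) := by rw [hcos i, hcos 0]
    have hmem : ∀ j, α j ∈ Icc 0 Real.pi := fun j =>
      ⟨(hα j).1, le_trans (hα j).2 (by linarith [Real.pi_pos])⟩
    exact Real.injOn_cos (hmem i) (hmem 0) h1
  set a := α 0 with ha
  have hc0 : 0 ≤ Real.cos a := Real.cos_nonneg_of_mem_Icc
    ⟨by linarith [(hα 0).1, Real.pi_pos], (hα 0).2⟩
  have hs0 : 0 ≤ Real.sin a := Real.sin_nonneg_of_nonneg_of_le_pi (hα 0).1
    (le_trans (hα 0).2 (by linarith [Real.pi_pos]))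
  -- norm facts for projections, for both P₁ and P₂
  have key : ∀ (P : Submodule ℝ (Euc n)) (c : ℝ), 0 ≤ c →
      (∀ i, ∀ z ∈ Submodule.span ℝ ({w, ws i} : Set (Euc n)), z ≠ 0 →
        ‖oproj P z‖ = c * ‖z‖) →
      ∀ z ∈ Submodule.span ℝ (range ![w, ws 0, ws 1]), ‖oproj P z‖ = c * ‖z‖ := by
    intro P c hc hplane z hz
    have hw1 : ‖oproj P w‖ = c * ‖w‖ := hplane 0 w (hwmem 0) hwne
    have hwsn : ∀ i, ‖oproj P (ws i)‖ = c * ‖ws i‖ :=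
      fun i => hplane i (ws i) (hwsmem i) (hwsne i)
    have hww : ∀ i, ‖oproj P (w + ws i)‖ = c * ‖w + ws i‖ := fun i =>
      hplane i (w + ws i) (add_mem (hwmem i) (hwsmem i)) (hwwsne i)
    have hcrossw : ∀ i, ⟪oproj P w, oproj P (ws i)⟫ = c ^ 2 * ⟪w, ws i⟫ :=
      fun i => polar P c w (ws i) hw1 (hwsn i) (hww i)
    have hsum' : ws 0 + ws 1 = -ws 2 := eq_neg_of_add_eq_zero_left hsum
    have h01n : ‖oproj P (ws 0 + ws 1)‖ = c * ‖ws 0 + ws 1‖ := by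
      rw [hsum']
      have : oproj P (-ws 2) = -oproj P (ws 2) := by simp [oproj]
      rw [this, norm_neg, norm_neg, hwsn 2]
    have hcross01 : ⟪oproj P (ws 0), oproj P (ws 1)⟫ = c ^ 2 * ⟪ws 0, ws 1⟫ :=
      polar P c (ws 0) (ws 1) (hwsn 0) (hwsn 1) h01n
    -- inner facts for quad
    have hself : ∀ x : Euc n, ‖oproj P x‖ = c * ‖x‖ →
        ⟪oproj P x, oproj P x⟫ = c ^ 2 * ⟪x, x⟫ := by
      intro x hx
      rw [real_inner_self_eq_norm_sq, real_inner_self_eq_norm_sq, hx]; ring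
    obtain ⟨g, rfl⟩ := (Submodule.mem_span_range_iff_exists_fun ℝ).mp hz
    have hexp : ∑ i, g i • ![w, ws 0, ws 1] i
        = g 0 • w + g 1 • ws 0 + g 2 • ws 1 := by
      rw [Fin.sum_univ_three]; rfl
    rw [hexp]
    exact quad P c hc w (ws 0) (ws 1) (hself w hw1) (hself _ (hwsn 0)) (hself _ (hwsn 1))
      (hcrossw 0) (hcrossw 1) hcross01 (g 0) (g 1) (g 2)
  -- span equality
  have hspan : Submodule.span ℝ (insert w (range ws))
      = Submodule.span ℝ (range ![w, ws 0, ws 1]) := by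
    apply le_antisymm
    · rw [Submodule.span_le]
      rintro x (rfl | ⟨i, rfl⟩)
      · exact Submodule.subset_span ⟨0, rfl⟩
      · fin_cases i
        · exact Submodule.subset_span ⟨1, rfl⟩
        · exact Submodule.subset_span ⟨2, rfl⟩
        · have h2 : ws 2 = -(ws 0 + ws 1) := eq_neg_of_add_eq_zero_right hsum
          show ws 2 ∈ Submodule.span ℝ (range ![w, ws 0, ws 1])
          rw [h2]
          exact neg_mem (add_mem (Submodule.subset_span ⟨1, rfl⟩)
            (Submodule.subset_span ⟨2, rfl⟩))
    · rw [Submodule.span_le]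
      rintro x ⟨i, rfl⟩
      fin_cases i
      · exact Submodule.subset_span (mem_insert _ _)
      · exact Submodule.subset_span (mem_insert_of_mem _ ⟨0, rfl⟩)
      · exact Submodule.subset_span (mem_insert_of_mem _ ⟨1, rfl⟩)
  -- linear independence
  have hli : LinearIndependent ℝ ![w, ws 0, ws 1] := by
    rw [Fintype.linearIndependent_iff]
    intro g hg
    have hexp : ∑ i, g i • ![w, ws 0, ws 1] i
        = g 0 • w + g 1 • ws 0 + g 2 • ws 1 := by
      rw [Fin.sum_univ_three]; rfl
    rw [hexp] at hg
    have e0 : ⟪w, g 0 • w + g 1 • ws 0 + g 2 • ws 1⟫ = (0:ℝ) := by rw [hg]; simp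
    have e1 : ⟪ws 0, g 0 • w + g 1 • ws 0 + g 2 • ws 1⟫ = (0:ℝ) := by rw [hg]; simp
    have e2 : ⟪ws 1, g 0 • w + g 1 • ws 0 + g 2 • ws 1⟫ = (0:ℝ) := by rw [hg]; simp
    simp only [inner_add_right, real_inner_smul_right, hwsq, hwssq, hwo, hwo',
      hij 0 1 (by decide), hij 1 0 (by decide)] at e0 e1 e2
    intro i
    fin_cases i <;> [skip; skip; skip] <;> simp <;> linarith
  refine ⟨a, hα 0, hαeq, ?_, ?_⟩
  · rw [hspan, finrank_span_eq_card hli]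
    simp
  · intro z hz hzne
    rw [hspan] at hz
    constructor
    · exact key P₁ (Real.cos a) hc0 (fun i => by
        intro z' hz' hz'ne
        rw [← hαeq i]
        exact (han i z' hz' hz'ne).1) z hz
    · exact key P₂ (Real.sin a) hs0 (fun i => by
        intro z' hz' hz'ne
        rw [← hαeq i]
        exact (han i z' hz' hz'ne).2) z hz

end
end

section
/- For every ε ∈ (0,1) there exists a constant C₂ = C₂(ε) > 100 such that the following holds: for every positive integer α, every r₀ ∈ (0,1), every δ > 0, and every u ∈ C¹(R_α, ℝ) satisfying u(x) ≥ δ r₀ − δ r₀/C₂ for all x ∈ L_α and u(x) < δ r₀/C₂ for all x ∈ K_α, one has ∫_{R_α} ‖∇u‖² dH² ≥ ε · (π δ² r₀²)/(α |log r₀|). -/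
open Set Metric MeasureTheory Filter Pointwise
open scoped ENNReal RealInnerProductSpace NNReal

noncomputable section

variable {n : ℕ}

-- auxiliary development
lemma vol_le_hausdorff : (volume : Measure (Euc 2)) ≤ μH[(2:ℝ)] := by
  refine Measure.le_intro fun s hs _ => ?_
  set e := (MeasurableEquiv.toLp 2 (Fin 2 → ℝ)).symm
  have hmp := EuclideanSpace.volume_preserving_symm_measurableEquiv_toLp (Fin 2)
  have h1 : volume s = volume (e '' s) := by
    rw [MeasurableEquiv.image_eq_preimage_symm]
    exact (hmp.symm e |>.measure_preimage hs.nullMeasurableSet).symm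
  have hpi : (μH[(2:ℝ)] : Measure (Fin 2 → ℝ)) = volume := by
    have := hausdorffMeasure_pi_real (ι := Fin 2)
    simpa [Fintype.card_fin] using this
  have h3 : μH[(2:ℝ)] (e '' s) ≤ μH[(2:ℝ)] s := by
    have hl : LipschitzWith 1 (e : Euc 2 → (Fin 2 → ℝ)) := PiLp.lipschitzWith_ofLp 2 _
    simpa using hl.hausdorffMeasure_image_le (by norm_num) s
  rw [h1, ← hpi]; exact h3

lemma pi_haus : (μH[(2:ℝ)] : Measure (Fin 2 → ℝ)) = volume := by
  have := hausdorffMeasure_pi_real (ι := Fin 2)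
  simpa [Fintype.card_fin] using this

lemma hausdorff_le_two_vol (s : Set (Euc 2)) (hs : MeasurableSet s) :
    μH[(2:ℝ)] s ≤ 2 * volume s := by
  set e := (MeasurableEquiv.toLp 2 (Fin 2 → ℝ)).symm
  have hmp := EuclideanSpace.volume_preserving_symm_measurableEquiv_toLp (Fin 2)
  have h1 : volume s = volume (e '' s) := by
    rw [MeasurableEquiv.image_eq_preimage_symm]
    exact (hmp.symm e |>.measure_preimage hs.nullMeasurableSet).symm
  have hls : LipschitzWith ((2:ℝ≥0) ^ (((2:ℝ≥0∞))⁻¹).toReal) (e.symm : (Fin 2 → ℝ) → Euc 2) := by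
    have h := PiLp.antilipschitzWith_ofLp 2 (fun _ : Fin 2 => ℝ)
    simp only [Fintype.card_fin, one_div] at h ⊢
    have : (e.symm : (Fin 2 → ℝ) → Euc 2) = (WithLp.equiv 2 (Fin 2 → ℝ)).symm := by
      rfl
    rw [this]
    exact h.to_rightInverse (WithLp.equiv 2 (Fin 2 → ℝ)).right_inv
  have h3 := hls.hausdorffMeasure_image_le (d := (2:ℝ)) (by norm_num) (e '' s)
  have himg : (e.symm : (Fin 2 → ℝ) → Euc 2) '' (e '' s) = s := by
    simp [e, Set.image_image]
  rw [himg, pi_haus] at h3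
  refine h3.trans ?_
  rw [h1]
  gcongr
  have hc : ((2:ℝ≥0) ^ (((2:ℝ≥0∞))⁻¹).toReal) ^ (2:ℕ) = (2:ℝ≥0) := by
    rw [← NNReal.rpow_natCast, ← NNReal.rpow_mul]
    norm_num
  calc (↑((2:ℝ≥0) ^ (((2:ℝ≥0∞))⁻¹).toReal) : ℝ≥0∞) ^ (2:ℝ)
      = ↑(((2:ℝ≥0) ^ (((2:ℝ≥0∞))⁻¹).toReal) ^ (2:ℕ)) := by
        rw [← ENNReal.coe_rpow_of_ne_zero (NNReal.rpow_pos (by norm_num)).ne']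
        norm_num [← NNReal.rpow_natCast (((2:ℝ≥0) ^ (((2:ℝ≥0∞))⁻¹).toReal)) 2]
    _ ≤ 2 := by rw [hc]; norm_num

def Tmap : ℝ × ℝ → Euc 2 := fun p => mk2 p.1 p.2

def TEquiv : (ℝ × ℝ) ≃ᵐ Euc 2 :=
  (MeasurableEquiv.finTwoArrow).symm.trans ((MeasurableEquiv.toLp 2 (Fin 2 → ℝ)).symm).symm

lemma TEquiv_eq : (TEquiv : ℝ × ℝ → Euc 2) = Tmap := by
  funext p
  show ((MeasurableEquiv.toLp 2 (Fin 2 → ℝ)).symm).symm (MeasurableEquiv.finTwoArrow.symm p) = _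
  simp [Tmap, mk2, MeasurableEquiv.finTwoArrow, MeasurableEquiv.toLp]
  rfl

lemma Tmap_mp : MeasurePreserving Tmap (volume : Measure (ℝ × ℝ)) volume := by
  rw [← TEquiv_eq]
  exact ((EuclideanSpace.volume_preserving_symm_measurableEquiv_toLp (Fin 2)).symm _).comp
    ((volume_preserving_finTwoArrow ℝ).symm _)

lemma mk2_inj {a b c d : ℝ} (h : mk2 a b = mk2 c d) : a = c ∧ b = d := by
  have := congrArg (EuclideanSpace.equiv (Fin 2) ℝ) h
  simp only [mk2, Equiv.apply_symm_apply] at this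
  exact ⟨congrFun this 0, congrFun this 1⟩

lemma norm_mk2 (a b : ℝ) : ‖mk2 a b‖ = Real.sqrt (a ^ 2 + b ^ 2) := by
  rw [EuclideanSpace.norm_eq]
  simp [mk2, Fin.sum_univ_two]

lemma Tmap_cont : Continuous Tmap := by
  have : Tmap = (WithLp.equiv 2 (Fin 2 → ℝ)).symm ∘ (fun p : ℝ × ℝ => ![p.1, p.2]) := rfl
  rw [this]
  exact (PiLp.continuous_toLp 2 (fun _ : Fin 2 => ℝ)).comp
    (continuous_pi fun i => by fin_cases i <;> [exact continuous_fst; exact continuous_snd])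

lemma sectorR_eq_image (α : ℕ) (r₀ : ℝ) :
    sectorR α r₀ = (fun q : ℝ × ℝ => Tmap (polarCoord.symm q)) ''
      (Icc r₀ 1 ×ˢ Icc 0 (Real.pi / α)) := by
  ext x
  constructor
  · rintro ⟨r, θ, h1, h2, h3, h4, rfl⟩
    exact ⟨(r, θ), ⟨⟨h1, h2⟩, ⟨h3, h4⟩⟩, by simp [Tmap, polarCoord]⟩
  · rintro ⟨⟨r, θ⟩, ⟨⟨h1, h2⟩, ⟨h3, h4⟩⟩, rfl⟩
    exact ⟨r, θ, h1, h2, h3, h4, by simp [Tmap, polarCoord]⟩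

lemma polarSymm_eq : (polarCoord.symm : ℝ × ℝ → ℝ × ℝ)
    = fun q => (q.1 * Real.cos q.2, q.1 * Real.sin q.2) := rfl

lemma sectorR_compact (α : ℕ) (r₀ : ℝ) : IsCompact (sectorR α r₀) := by
  rw [sectorR_eq_image]
  refine ((isCompact_Icc).prod (isCompact_Icc)).image ?_
  refine Tmap_cont.comp ?_
  rw [polarSymm_eq]; fun_prop

lemma mem_sector_iff (α : ℕ) (r₀ : ℝ) (h0 : 0 < r₀) {q : ℝ × ℝ}
    (hq : q ∈ polarCoord.target) :
    Tmap (polarCoord.symm q) ∈ sectorR α r₀ ↔ q ∈ Icc r₀ 1 ×ˢ Icc 0 (Real.pi / α) := by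
  rw [polarCoord_target] at hq
  obtain ⟨hq1, hq2⟩ := hq
  simp only [mem_Ioi] at hq1
  simp only [mem_Ioo] at hq2
  constructor
  · rintro ⟨r, θ, h1, h2, h3, h4, hx⟩
    simp only [Tmap, polarCoord_symm_apply] at hx
    obtain ⟨ha, hb⟩ := mk2_inj hx
    have hθπ : θ ≤ Real.pi := by
      refine h4.trans ?_
      rcases Nat.eq_zero_or_pos α with h | h
      · simp [h, Real.pi_pos.le]
      · exact div_le_self Real.pi_pos.le (by exact_mod_cast h)
    have h5 : q.1 ^ 2 = r ^ 2 := by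
      have e1 : q.1 ^ 2 = (q.1 * Real.cos q.2) ^ 2 + (q.1 * Real.sin q.2) ^ 2 := by
        rw [mul_pow, mul_pow, ← mul_add, Real.cos_sq_add_sin_sq, mul_one]
      have e2 : r ^ 2 = (r * Real.cos θ) ^ 2 + (r * Real.sin θ) ^ 2 := by
        rw [mul_pow, mul_pow, ← mul_add, Real.cos_sq_add_sin_sq, mul_one]
      rw [e1, e2, ha, hb]
    have hr : q.1 = r := by
      rcases sq_eq_sq_iff_eq_or_eq_neg.mp h5 with h | h
      · exact h
      · exfalso; nlinarith [h0.trans_le h1]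
    rw [hr] at ha hb
    have rne : r ≠ 0 := (h0.trans_le h1).ne'
    have hcos := mul_left_cancel₀ rne ha
    have hsin := mul_left_cancel₀ rne hb
    have hq2nonneg : 0 ≤ q.2 := by
      by_contra hneg
      push_neg at hneg
      have := Real.sin_neg_of_neg_of_neg_pi_lt hneg hq2.1
      have hsθ : 0 ≤ Real.sin θ := Real.sin_nonneg_of_nonneg_of_le_pi h3 hθπ
      linarith [hsin]
    have hθeq : q.2 = θ :=
      Real.injOn_cos ⟨hq2nonneg, hq2.2.le⟩ ⟨h3, hθπ⟩ hcos
    exact ⟨⟨by rw [hr]; exact h1, by rw [hr]; exact h2⟩,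
      ⟨hq2nonneg, by rw [hθeq]; exact h4⟩⟩
  · rintro ⟨⟨h1, h2⟩, ⟨h3, h4⟩⟩
    exact ⟨q.1, q.2, h1, h2, h3, h4, rfl⟩

lemma one_dim (r₀ : ℝ) (h0 : 0 < r₀) (h1 : r₀ < 1) (φ : ℝ → ℝ)
    (hφ : ContinuousOn φ (Icc r₀ 1)) (hφ0 : ∀ r ∈ Icc r₀ 1, 0 ≤ φ r)
    (M : ℝ) (hM : 0 ≤ M) (hI : M ≤ ∫ r in r₀..1, φ r) :
    M ^ 2 / (-Real.log r₀) ≤ ∫ r in r₀..1, r * φ r ^ 2 := by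
  have hle : r₀ ≤ 1 := h1.le
  have huIcc : uIcc r₀ 1 = Icc r₀ 1 := uIcc_of_le hle
  have hL : 0 < -Real.log r₀ := by
    have := Real.log_neg h0 h1
    linarith
  set L : ℝ := -Real.log r₀ with hLdef
  set I : ℝ := ∫ r in r₀..1, φ r with hIdef
  have hInn : 0 ≤ I := hM.trans hI
  set c : ℝ := I / L with hcdef
  have h0mem : (0:ℝ) ∉ uIcc r₀ 1 := by
    rw [huIcc]; rintro ⟨ha, _⟩; linarith
  -- continuity facts
  have hcont1 : ContinuousOn (fun r : ℝ => r * φ r ^ 2) (Icc r₀ 1) :=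
    (continuousOn_id.mul (hφ.pow 2))
  have hcont2 : ContinuousOn (fun r : ℝ => c ^ 2 * (1 / r)) (Icc r₀ 1) := by
    refine continuousOn_const.mul (ContinuousOn.div continuousOn_const continuousOn_id ?_)
    rintro r ⟨ha, _⟩ h
    rw [h] at ha; linarith
  have hint1 : IntervalIntegrable (fun r : ℝ => r * φ r ^ 2) volume r₀ 1 :=
    (hcont1.mono (by rw [huIcc])).intervalIntegrable
  have hint2 : IntervalIntegrable (fun r : ℝ => c ^ 2 * (1 / r)) volume r₀ 1 :=
    (hcont2.mono (by rw [huIcc])).intervalIntegrable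
  have hint3 : IntervalIntegrable (fun r : ℝ => 2 * c * φ r) volume r₀ 1 :=
    ((continuousOn_const.mul hφ).mono (by rw [huIcc])).intervalIntegrable
  -- the square expansion
  have hexp : ∀ r ∈ uIcc r₀ 1,
      (Real.sqrt r * φ r - c / Real.sqrt r) ^ 2
        = r * φ r ^ 2 - 2 * c * φ r + c ^ 2 * (1 / r) := by
    intro r hr
    rw [huIcc] at hr
    have hrpos : 0 < r := lt_of_lt_of_le h0 hr.1
    have hs : Real.sqrt r ^ 2 = r := Real.sq_sqrt hrpos.le
    have hsne : Real.sqrt r ≠ 0 := (Real.sqrt_pos.mpr hrpos).ne'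
    have e1 : (Real.sqrt r * φ r) ^ 2 = r * φ r ^ 2 := by rw [mul_pow, hs]
    have e3 : (c / Real.sqrt r) ^ 2 = c ^ 2 * (1 / r) := by rw [div_pow, hs]; ring
    have e2 : Real.sqrt r * φ r * (c / Real.sqrt r) = c * φ r := by
      field_simp
    rw [sub_sq, e1, e3, mul_assoc 2, e2]
    ring
  have hnonneg : 0 ≤ ∫ r in r₀..1,
      (Real.sqrt r * φ r - c / Real.sqrt r) ^ 2 :=
    intervalIntegral.integral_nonneg hle (fun r _ => sq_nonneg _)
  have hlog : (∫ r in r₀..1, c ^ 2 * (1 / r)) = c ^ 2 * L := by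
    rw [intervalIntegral.integral_const_mul, integral_one_div h0mem]
    rw [Real.log_div one_ne_zero h0.ne', Real.log_one]
    ring
  have hsplit : (∫ r in r₀..1, (Real.sqrt r * φ r - c / Real.sqrt r) ^ 2)
      = (∫ r in r₀..1, r * φ r ^ 2) - 2 * c * I + c ^ 2 * L := by
    rw [intervalIntegral.integral_congr hexp]
    rw [intervalIntegral.integral_add (hint1.sub hint3) hint2,
      intervalIntegral.integral_sub hint1 hint3, hlog,
      intervalIntegral.integral_const_mul]
  rw [hsplit] at hnonneg
  -- conclude
  have hkey : I ^ 2 / L ≤ ∫ r in r₀..1, r * φ r ^ 2 := by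
    have hc : 2 * c * I - c ^ 2 * L = I ^ 2 / L := by
      rw [hcdef]
      field_simp
      ring
    nlinarith [hnonneg]
  refine le_trans ?_ hkey
  gcongr

lemma smul_mk2 (r a b : ℝ) : mk2 (r * a) (r * b) = r • mk2 a b := by
  apply (EuclideanSpace.equiv (Fin 2) ℝ).injective
  simp only [mk2, Equiv.apply_symm_apply]
  funext i
  fin_cases i <;> simp [mk2]

lemma ftc_bound (r₀ : ℝ) (h0 : 0 < r₀) (h1 : r₀ < 1) (u : Euc 2 → ℝ) (V : Set (Euc 2))
    (hV : IsOpen V) (hu : ContDiffOn ℝ 1 u V) (θ : ℝ)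
    (hsub : ∀ r ∈ Icc r₀ 1, Tmap (r * Real.cos θ, r * Real.sin θ) ∈ V) :
    u (Tmap (r₀ * Real.cos θ, r₀ * Real.sin θ)) - u (Tmap (1 * Real.cos θ, 1 * Real.sin θ))
      ≤ ∫ r in r₀..1, ‖fderiv ℝ u (Tmap (r * Real.cos θ, r * Real.sin θ))‖ := by
  have hle : r₀ ≤ 1 := h1.le
  have huIcc : uIcc r₀ 1 = Icc r₀ 1 := uIcc_of_le hle
  set v : Euc 2 := mk2 (Real.cos θ) (Real.sin θ) with hv
  have hγ : ∀ r : ℝ, Tmap (r * Real.cos θ, r * Real.sin θ) = r • v := by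
    intro r; exact smul_mk2 r _ _
  set γ : ℝ → Euc 2 := fun r => r • v with hγdef
  have hγcont : Continuous γ := by fun_prop
  have hγderiv : ∀ r : ℝ, HasDerivAt γ v r := by
    intro r
    simpa using (hasDerivAt_id r).smul_const v
  have hmem : ∀ r ∈ Icc r₀ 1, γ r ∈ V := by
    intro r hr
    have h := hsub r hr
    rwa [hγ r] at h
  set g : ℝ → ℝ := fun r => fderiv ℝ u (γ r) v with hg
  have hder : ∀ r ∈ uIcc r₀ 1, HasDerivAt (u ∘ γ) (g r) r := by
    intro r hr
    rw [huIcc] at hr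
    have hdiff : DifferentiableAt ℝ u (γ r) :=
      (hu.differentiableOn one_ne_zero).differentiableAt (hV.mem_nhds (hmem r hr))
    exact hdiff.hasFDerivAt.comp_hasDerivAt r (hγderiv r)
  have hfc : ContinuousOn (fderiv ℝ u) V := hu.continuousOn_fderiv_of_isOpen hV le_rfl
  have hgcont : ContinuousOn g (Icc r₀ 1) := by
    refine ContinuousOn.clm_apply ?_ continuousOn_const
    exact hfc.comp hγcont.continuousOn hmem
  have hφcont : ContinuousOn (fun r => ‖fderiv ℝ u (γ r)‖) (Icc r₀ 1) :=
    (hfc.comp hγcont.continuousOn hmem).norm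
  have hgint : IntervalIntegrable g volume r₀ 1 :=
    (hgcont.mono (by rw [huIcc])).intervalIntegrable
  have hφint : IntervalIntegrable (fun r => ‖fderiv ℝ u (γ r)‖) volume r₀ 1 :=
    (hφcont.mono (by rw [huIcc])).intervalIntegrable
  have hftc : ∫ r in r₀..1, g r = (u ∘ γ) 1 - (u ∘ γ) r₀ :=
    intervalIntegral.integral_eq_sub_of_hasDerivAt hder hgint
  have hvnorm : ‖v‖ = 1 := by
    rw [hv, norm_mk2]
    rw [Real.sqrt_eq_one]
    exact Real.cos_sq_add_sin_sq θ
  have habs : ∀ r ∈ Icc r₀ 1, |g r| ≤ ‖fderiv ℝ u (γ r)‖ := by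
    intro r hr
    calc |g r| ≤ ‖fderiv ℝ u (γ r)‖ * ‖v‖ := (fderiv ℝ u (γ r)).le_opNorm v
      _ = ‖fderiv ℝ u (γ r)‖ := by rw [hvnorm, mul_one]
  calc u (Tmap (r₀ * Real.cos θ, r₀ * Real.sin θ))
        - u (Tmap (1 * Real.cos θ, 1 * Real.sin θ))
      = -(∫ r in r₀..1, g r) := by rw [hftc, hγ r₀, hγ 1]; simp [hγdef]
    _ ≤ |∫ r in r₀..1, g r| := by rw [abs_eq_max_neg]; exact le_max_right _ _
    _ ≤ ∫ r in r₀..1, |g r| := by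
        rw [← Real.norm_eq_abs]
        refine (intervalIntegral.norm_integral_le_integral_norm hle).trans_eq ?_
        simp [Real.norm_eq_abs]
    _ ≤ ∫ r in r₀..1, ‖fderiv ℝ u (γ r)‖ := by
        refine intervalIntegral.integral_mono_on hle (hgint.abs) hφint ?_
        exact habs
    _ = _ := by
        refine intervalIntegral.integral_congr fun r hr => ?_
        rw [hγ r]


/-- **Energy lower bound on a sector (Proposition 7.11).** For every `ε ∈ (0,1)` there is
`C₂ = C₂(ε) > 100` such that for every positive integer `α`, `r₀ ∈ (0,1)`, `δ > 0` and
`u ∈ C¹(R_α, ℝ)` with `u ≥ δr₀ − δr₀/C₂` on `L_α` and `u < δr₀/C₂` on `K_α`, one has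
`∫_{R_α} |∇u|² ≥ ε·πδ²r₀²/(α|log r₀|)`. -/
theorem sector_energy_lower_bound
    (ε : ℝ) (hε : ε ∈ Ioo (0 : ℝ) 1) :
    ∃ C₂ : ℝ, 100 < C₂ ∧
      ∀ (α : ℕ), 0 < α → ∀ r₀ : ℝ, 0 < r₀ → r₀ < 1 → ∀ δ : ℝ, 0 < δ →
        ∀ (u : Euc 2 → ℝ) (V : Set (Euc 2)), IsOpen V → sectorR α r₀ ⊆ V →
          ContDiffOn ℝ 1 u V →
          (∀ x ∈ sectorL α r₀, δ * r₀ - δ * r₀ / C₂ ≤ u x) →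
          (∀ x ∈ sectorK α, u x < δ * r₀ / C₂) →
          ε * (Real.pi * δ ^ 2 * r₀ ^ 2) / (α * |Real.log r₀|) ≤
            ∫ x in sectorR α r₀, ‖fderiv ℝ u x‖ ^ 2 ∂μH[(2:ℝ)] := by
  obtain ⟨hε0, hε1⟩ := hε
  have hsqε : Real.sqrt ε < 1 := by
    rw [show (1:ℝ) = Real.sqrt 1 by simp]
    exact Real.sqrt_lt_sqrt hε0.le hε1
  have hsqε0 : 0 < Real.sqrt ε := Real.sqrt_pos.mpr hε0
  set C₂ : ℝ := max 101 (4 / (1 - Real.sqrt ε)) with hC₂def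
  have hC101 : (101:ℝ) ≤ C₂ := le_max_left _ _
  have hC₂pos : 0 < C₂ := by linarith
  have hCsq : Real.sqrt ε ≤ 1 - 2 / C₂ := by
    have h4 : 4 / (1 - Real.sqrt ε) ≤ C₂ := le_max_right _ _
    have h1ε : 0 < 1 - Real.sqrt ε := by linarith
    have : 2 / C₂ ≤ (1 - Real.sqrt ε) / 2 := by
      rw [div_le_div_iff₀ hC₂pos (by norm_num)]
      have := (div_le_iff₀ h1ε).mp h4
      linarith
    have hhalf : Real.sqrt ε ≤ (1 + Real.sqrt ε) / 2 := by linarith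
    linarith
  refine ⟨C₂, by linarith, ?_⟩
  intro α hα r₀ hr₀ hr₁ δ hδ u V hV hSV hu hL hK
  set S := sectorR α r₀ with hSdef
  set f : Euc 2 → ℝ := fun x => ‖fderiv ℝ u x‖ ^ 2 with hfdef
  set θα : ℝ := Real.pi / α with hθαdef
  have hθαpos : 0 < θα := by
    apply div_pos Real.pi_pos
    exact_mod_cast hα
  have hθαπ : θα ≤ Real.pi := div_le_self Real.pi_pos.le (by exact_mod_cast hα)
  set rect : Set (ℝ × ℝ) := Icc r₀ 1 ×ˢ Icc 0 θα with hrectdef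
  set L : ℝ := -Real.log r₀ with hLdef
  have hLpos : 0 < L := by
    have := Real.log_neg hr₀ hr₁
    simp only [hLdef]; linarith
  set M : ℝ := δ * r₀ - 2 * (δ * r₀ / C₂) with hMdef
  have hM0 : 0 ≤ M := by
    rw [hMdef]
    have h1 : δ * r₀ / C₂ ≤ δ * r₀ / 101 := by
      apply div_le_div_of_nonneg_left (by positivity) (by norm_num) hC101
    have : 0 < δ * r₀ := by positivity
    nlinarith
  have hScompact : IsCompact S := sectorR_compact α r₀
  have hSmeas : MeasurableSet S := hScompact.isClosed.measurableSet
  have hfderiv_cont : ContinuousOn (fderiv ℝ u) V :=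
    hu.continuousOn_fderiv_of_isOpen hV le_rfl
  have hfcont : ContinuousOn f V := (hfderiv_cont.norm).pow 2
  have hfnn : ∀ x, 0 ≤ f x := fun x => by positivity
  -- Step 1: reduce Hausdorff to Lebesgue
  obtain ⟨B, hB⟩ := hScompact.exists_bound_of_continuousOn (hfcont.mono hSV)
  have hμHS_fin : μH[(2:ℝ)] S < ⊤ := by
    refine lt_of_le_of_lt (hausdorff_le_two_vol S hSmeas) ?_
    exact ENNReal.mul_lt_top (by norm_num) hScompact.measure_lt_top
  haveI hfinH : IsFiniteMeasure ((μH[(2:ℝ)] : Measure (Euc 2)).restrict S) := by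
    constructor
    rw [Measure.restrict_apply_univ]
    exact hμHS_fin
  have hint_H : Integrable f ((μH[(2:ℝ)] : Measure (Euc 2)).restrict S) := by
    constructor
    · exact (hfcont.mono hSV).aestronglyMeasurable hSmeas
    · exact HasFiniteIntegral.of_bounded
        ((ae_restrict_iff' hSmeas).2 (Eventually.of_forall fun x hx => hB x hx))
  have step1 : ∫ x in S, f x ∂volume ≤ ∫ x in S, f x ∂μH[(2:ℝ)] := by
    refine integral_mono_measure (Measure.restrict_mono (subset_refl S) vol_le_hausdorff)
      (Eventually.of_forall fun x => hfnn x) hint_H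
  -- Step 2: transfer to ℝ × ℝ
  have hTemb : MeasurableEmbedding Tmap := by
    rw [← TEquiv_eq]; exact TEquiv.measurableEmbedding
  have step2 : ∫ p in Tmap ⁻¹' S, f (Tmap p) ∂volume = ∫ x in S, f x ∂volume :=
    Tmap_mp.setIntegral_preimage_emb hTemb f S
  -- Step 3/4: polar coordinates
  have hpreS_meas : MeasurableSet (Tmap ⁻¹' S) :=
    hTemb.measurable hSmeas
  set G : ℝ × ℝ → ℝ := (Tmap ⁻¹' S).indicator (fun p => f (Tmap p)) with hGdef
  have step3 : ∫ p in Tmap ⁻¹' S, f (Tmap p) ∂volume = ∫ p, G p ∂volume :=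
    (integral_indicator hpreS_meas).symm
  have step4 : ∫ p, G p ∂volume
      = ∫ q in polarCoord.target, q.1 • G (polarCoord.symm q) ∂volume :=
    (integral_comp_polarCoord_symm G).symm
  -- Step 5: identify the indicator on the target
  set H : ℝ × ℝ → ℝ := fun q => q.1 * f (Tmap (polarCoord.symm q)) with hHdef
  have step5 : ∫ q in polarCoord.target, q.1 • G (polarCoord.symm q) ∂volume
      = ∫ q in polarCoord.target, rect.indicator H q ∂volume := by
    refine setIntegral_congr_fun polarCoord.open_target.measurableSet fun q hq => ?_
    by_cases hmem : q ∈ rect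
    · have : Tmap (polarCoord.symm q) ∈ S := (mem_sector_iff α r₀ hr₀ hq).mpr hmem
      have hmem' : polarCoord.symm q ∈ Tmap ⁻¹' S := this
      rw [Set.indicator_of_mem hmem, hGdef, Set.indicator_of_mem hmem']
      simp [hHdef, smul_eq_mul]
    · have : Tmap (polarCoord.symm q) ∉ S := fun h => hmem ((mem_sector_iff α r₀ hr₀ hq).mp h)
      have hmem' : polarCoord.symm q ∉ Tmap ⁻¹' S := this
      rw [Set.indicator_of_notMem hmem, hGdef, Set.indicator_of_notMem hmem']
      simp
  -- Step 6: pass to the rectangle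
  have hrect_meas : MeasurableSet rect := measurableSet_Icc.prod measurableSet_Icc
  have haeeq : (polarCoord.target ∩ rect : Set (ℝ × ℝ)) =ᵐ[volume] rect := by
    rw [MeasureTheory.ae_eq_set]
    constructor
    · have hempty : (polarCoord.target ∩ rect) \ rect = ∅ :=
        Set.diff_eq_empty.mpr Set.inter_subset_right
      rw [hempty]
      exact measure_empty
    · refine measure_mono_null
        (show rect \ (polarCoord.target ∩ rect) ⊆ (univ : Set ℝ) ×ˢ ({Real.pi} : Set ℝ) from ?_) ?_
      · rintro ⟨a, b⟩ ⟨⟨⟨ha1, ha2⟩, ⟨hb1, hb2⟩⟩, hnot⟩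
        have hnt : (a, b) ∉ polarCoord.target := fun h => hnot ⟨h, ⟨⟨ha1, ha2⟩, ⟨hb1, hb2⟩⟩⟩
        rw [polarCoord_target] at hnt
        simp only [mem_prod, mem_Ioi, mem_Ioo, not_and_or, not_lt] at hnt
        constructor
        · trivial
        · simp only [mem_singleton_iff]
          rcases hnt with h | h
          · exfalso; linarith
          · rcases h with h | h
            · exfalso; linarith [Real.pi_pos]
            · have : b ≤ Real.pi := le_trans hb2 hθαπ
              linarith
      · rw [Measure.volume_eq_prod, Measure.prod_prod]
        simp
  have step6 : ∫ q in polarCoord.target, rect.indicator H q ∂volume = ∫ q in rect, H q ∂volume := by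
    rw [setIntegral_indicator hrect_meas, setIntegral_congr_set haeeq]
  -- Step 7: Fubini
  have hpolar_cont : Continuous (fun q : ℝ × ℝ => Tmap (polarCoord.symm q)) := by
    refine Tmap_cont.comp ?_
    rw [polarSymm_eq]; fun_prop
  have hmapsV : Set.MapsTo (fun q : ℝ × ℝ => Tmap (polarCoord.symm q)) rect V := by
    intro q hq
    apply hSV
    rw [hSdef, sectorR_eq_image]
    exact ⟨q, hq, rfl⟩
  have hHcont : ContinuousOn H rect :=
    (continuous_fst.continuousOn).mul (hfcont.comp hpolar_cont.continuousOn hmapsV)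
  have hrect_cpt : IsCompact rect := isCompact_Icc.prod isCompact_Icc
  have hHint : IntegrableOn H rect volume := hHcont.integrableOn_compact hrect_cpt
  have hprodmeas : ((volume : Measure ℝ).restrict (Icc r₀ 1)).prod
      ((volume : Measure ℝ).restrict (Icc 0 θα)) = (volume : Measure (ℝ × ℝ)).restrict rect := by
    rw [Measure.prod_restrict, ← Measure.volume_eq_prod]
  have hHint' : Integrable H (((volume : Measure ℝ).restrict (Icc r₀ 1)).prod
      ((volume : Measure ℝ).restrict (Icc 0 θα))) := by
    rw [hprodmeas]; exact hHint
  have step7 : ∫ q in rect, H q ∂volume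
      = ∫ θ in Icc 0 θα, ∫ r in Icc r₀ 1, H (r, θ) ∂volume ∂volume := by
    rw [← hprodmeas, integral_prod H hHint']
    exact integral_integral_swap (f := fun r θ => H (r, θ)) (by exact hHint')
  -- per-θ radial estimate
  have hperθ : ∀ θ ∈ Icc 0 θα, M ^ 2 / L ≤ ∫ r in Icc r₀ 1, H (r, θ) ∂volume := by
    intro θ hθ
    set φ : ℝ → ℝ := fun r => ‖fderiv ℝ u (Tmap (r * Real.cos θ, r * Real.sin θ))‖ with hφdef
    have hsub : ∀ r ∈ Icc r₀ 1, Tmap (r * Real.cos θ, r * Real.sin θ) ∈ V := by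
      intro r hr
      apply hSV
      exact ⟨r, θ, hr.1, hr.2, hθ.1, hθ.2, rfl⟩
    have hγc : Continuous (fun r : ℝ => Tmap (r * Real.cos θ, r * Real.sin θ)) :=
      Tmap_cont.comp (by fun_prop)
    have hφcont : ContinuousOn φ (Icc r₀ 1) :=
      ((hfderiv_cont.comp hγc.continuousOn hsub).norm)
    have hbdry1 : δ * r₀ - δ * r₀ / C₂ ≤ u (Tmap (r₀ * Real.cos θ, r₀ * Real.sin θ)) :=
      hL _ ⟨θ, hθ.1, hθ.2, rfl⟩
    have hbdry2 : u (Tmap (1 * Real.cos θ, 1 * Real.sin θ)) < δ * r₀ / C₂ := by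
      have he : Tmap ((1:ℝ) * Real.cos θ, (1:ℝ) * Real.sin θ)
          = mk2 (Real.cos θ) (Real.sin θ) := by
        norm_num [Tmap]
      rw [he]
      exact hK _ ⟨θ, hθ.1, hθ.2, rfl⟩
    have hM_le : M ≤ ∫ r in r₀..1, φ r := by
      refine le_trans ?_ (ftc_bound r₀ hr₀ hr₁ u V hV hu θ hsub)
      rw [hMdef]
      linarith
    have h1d := one_dim r₀ hr₀ hr₁ φ hφcont (fun r _ => norm_nonneg _) M hM0 hM_le
    calc M ^ 2 / L ≤ ∫ r in r₀..1, r * φ r ^ 2 := h1d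
      _ = ∫ r in Icc r₀ 1, H (r, θ) ∂volume := by
          rw [intervalIntegral.integral_of_le hr₁.le, ← integral_Icc_eq_integral_Ioc]
          rfl
  -- Step 9: integrate over θ
  have hJint : IntegrableOn (fun θ => ∫ r in Icc r₀ 1, H (r, θ) ∂volume) (Icc 0 θα) volume :=
    hHint'.integral_prod_right
  have hIccfin : (volume : Measure ℝ) (Icc 0 θα) ≠ ⊤ := by
    rw [Real.volume_Icc]
    exact ENNReal.ofReal_ne_top
  have step9 : θα * (M ^ 2 / L)
      ≤ ∫ θ in Icc 0 θα, ∫ r in Icc r₀ 1, H (r, θ) ∂volume ∂volume := by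
    have h := setIntegral_ge_of_const_le measurableSet_Icc hIccfin hperθ hJint
    have hvol : (volume : Measure ℝ).real (Icc 0 θα) = θα := by
      rw [measureReal_def, Real.volume_Icc, ENNReal.toReal_ofReal (by linarith)]
      ring
    rw [hvol, smul_eq_mul] at h
    linarith
  -- final arithmetic
  have habs : |Real.log r₀| = L := by
    rw [hLdef, abs_of_neg (Real.log_neg hr₀ hr₁)]
  have hM2 : ε * (δ ^ 2 * r₀ ^ 2) ≤ M ^ 2 := by
    have hMeq : M = δ * r₀ * (1 - 2 / C₂) := by rw [hMdef]; ring
    have h2 : δ * r₀ * Real.sqrt ε ≤ M := by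
      rw [hMeq]
      exact mul_le_mul_of_nonneg_left hCsq (by positivity)
    have h3 : (δ * r₀ * Real.sqrt ε) ^ 2 ≤ M ^ 2 :=
      pow_le_pow_left₀ (by positivity) h2 2
    calc ε * (δ ^ 2 * r₀ ^ 2) = (δ * r₀ * Real.sqrt ε) ^ 2 := by
          rw [mul_pow, mul_pow, Real.sq_sqrt hε0.le]; ring
      _ ≤ M ^ 2 := h3
  have hαpos : (0:ℝ) < (α : ℝ) := by exact_mod_cast hα
  have hfin : ε * (Real.pi * δ ^ 2 * r₀ ^ 2) / (↑α * L) ≤ θα * (M ^ 2 / L) := by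
    have hl : ε * (Real.pi * δ ^ 2 * r₀ ^ 2) / (↑α * L)
        = (ε * (δ ^ 2 * r₀ ^ 2)) * (Real.pi / (↑α * L)) := by ring
    have hr : θα * (M ^ 2 / L) = M ^ 2 * (Real.pi / (↑α * L)) := by
      rw [hθαdef]; ring
    rw [hl, hr]
    exact mul_le_mul_of_nonneg_right hM2 (by positivity)
  calc ε * (Real.pi * δ ^ 2 * r₀ ^ 2) / (↑α * |Real.log r₀|)
      = ε * (Real.pi * δ ^ 2 * r₀ ^ 2) / (↑α * L) := by rw [habs]
    _ ≤ θα * (M ^ 2 / L) := hfin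
    _ ≤ ∫ θ in Icc 0 θα, ∫ r in Icc r₀ 1, H (r, θ) ∂volume ∂volume := step9
    _ = ∫ q in rect, H q ∂volume := step7.symm
    _ = ∫ q in polarCoord.target, rect.indicator H q ∂volume := step6.symm
    _ = ∫ q in polarCoord.target, q.1 • G (polarCoord.symm q) ∂volume := step5.symm
    _ = ∫ p, G p ∂volume := step4.symm
    _ = ∫ p in Tmap ⁻¹' S, f (Tmap p) ∂volume := step3.symm
    _ = ∫ x in S, f x ∂volume := step2
    _ ≤ ∫ x in S, f x ∂μH[(2:ℝ)] := step1

end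
end
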